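/- Let M be a finite-dimensional associative unital algebra over ℂ with a nondegenerate symmetric cyclic bilinear form B, let (α_i) be a basis of M and (α^i) the dual basis with B(α_i, α^k) = δ_i^k, and let σ_M = Σ_i α_i ⊗ α^i be the permutation element. Then σ_M satisfies the Yang–Baxter equation: (σ_M)₁₂ * (σ_M)₁₃ * (σ_M)₂₃ = (σ_M)₂₃ * (σ_M)₁₃ * (σ_M)₁₂ in M ⊗ M ⊗ M. -/

import Mathlib

open scoped TensorProduct

noncomputable section

variable (M : Type) [Ring M] [Algebra ℂ M]

/-- Embedding of `M ⊗ M` into the first two factors of `M ⊗ M ⊗ M`. -/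
noncomputable def emb12 : (M ⊗[ℂ] M) →ₐ[ℂ] (M ⊗[ℂ] M) ⊗[ℂ] M :=
  Algebra.TensorProduct.includeLeft

/-- Embedding of `M ⊗ M` into the first and third factors of `M ⊗ M ⊗ M`. -/
noncomputable def emb13 : (M ⊗[ℂ] M) →ₐ[ℂ] (M ⊗[ℂ] M) ⊗[ℂ] M :=
  Algebra.TensorProduct.map Algebra.TensorProduct.includeLeft (AlgHom.id ℂ M)

/-- Embedding of `M ⊗ M` into the last two factors of `M ⊗ M ⊗ M`. -/
noncomputable def emb23 : (M ⊗[ℂ] M) →ₐ[ℂ] (M ⊗[ℂ] M) ⊗[ℂ] M :=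
  Algebra.TensorProduct.map Algebra.TensorProduct.includeRight (AlgHom.id ℂ M)

/-- The Yang–Baxter equation for `R ∈ M ⊗ M`. -/
def YBE (R : M ⊗[ℂ] M) : Prop :=
  emb12 M R * emb13 M R * emb23 M R = emb23 M R * emb13 M R * emb12 M R

/-- The permutation element of a finite-dimensional algebra with a nondegenerate
symmetric cyclic bilinear form satisfies the Yang–Baxter equation. -/
theorem stmt0
    [FiniteDimensional ℂ M]
    (B : M →ₗ[ℂ] M →ₗ[ℂ] ℂ)
    (hnd : ∀ a : M, (∀ b : M, B a b = 0) → a = 0)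
    (hsymm : ∀ a b : M, B a b = B b a)
    (hcyc : ∀ a b c : M, B (a * b) c = B b (c * a))
    (ι : Type) [Fintype ι] [DecidableEq ι] (bas : Module.Basis ι ℂ M) (dbas : ι → M)
    (hdual : ∀ i k : ι, B (bas i) (dbas k) = if i = k then 1 else 0) :
    YBE M (∑ i, bas i ⊗ₜ[ℂ] dbas i) := by
  classical
  -- coefficient lemma: B x (dbas k) is the k-th coordinate of x
  have hrep : ∀ (x : M) (k : ι), B x (dbas k) = bas.repr x k := by
    intro x k
    nth_rewrite 1 [← bas.sum_repr x]
    simp only [map_sum, map_smul, LinearMap.sum_apply, LinearMap.smul_apply, smul_eq_mul, hdual, mul_ite, mul_one, mul_zero, Finset.sum_ite_eq', Finset.mem_univ, if_true]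
  -- expansion in the basis
  have expand1 : ∀ x : M, ∑ k, B x (dbas k) • bas k = x := by
    intro x
    simp_rw [hrep]
    exact bas.sum_repr x
  -- expansion in the dual basis (uses nondegeneracy)
  have expand2 : ∀ x : M, ∑ i, B (bas i) x • dbas i = x := by
    intro x
    set y := ∑ i, B (bas i) x • dbas i with hy
    have key : ∀ k, B (y - x) (bas k) = 0 := by
      intro k
      have h1 : B y (bas k) = B x (bas k) := by
        rw [hy, map_sum]
        simp only [map_smul, smul_eq_mul, LinearMap.sum_apply, LinearMap.smul_apply]
        have : ∀ i, B (bas i) x * B (dbas i) (bas k)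
            = B (bas i) x * (if k = i then 1 else 0) := by
          intro i
          rw [hsymm (dbas i) (bas k), hdual]
        simp_rw [this, mul_ite, mul_one, mul_zero, Finset.sum_ite_eq, Finset.mem_univ, if_true]
        rw [hsymm]
      rw [map_sub, LinearMap.sub_apply, h1, sub_self]
    have hzero : y - x = 0 := by
      apply hnd
      intro b
      have hb : B (y - x) = 0 := by
        apply bas.ext
        intro k
        simpa using key k
      rw [hb]; rfl
    have := sub_eq_zero.mp hzero
    exact this
  -- one-sided intertwining relations
  have L1 : ∀ a : M, (∑ i, (a * bas i) ⊗ₜ[ℂ] dbas i) = ∑ i, bas i ⊗ₜ[ℂ] (dbas i * a) := by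
    intro a
    calc ∑ i, (a * bas i) ⊗ₜ[ℂ] dbas i
        = ∑ i, (∑ k, B (a * bas i) (dbas k) • bas k) ⊗ₜ[ℂ] dbas i := by
          simp_rw [expand1]
      _ = ∑ i, ∑ k, B (a * bas i) (dbas k) • (bas k ⊗ₜ[ℂ] dbas i) := by
          simp_rw [TensorProduct.sum_tmul, TensorProduct.smul_tmul']
      _ = ∑ k, ∑ i, B (bas i) (dbas k * a) • (bas k ⊗ₜ[ℂ] dbas i) := by
          rw [Finset.sum_comm]
          simp_rw [hcyc]
      _ = ∑ k, bas k ⊗ₜ[ℂ] (∑ i, B (bas i) (dbas k * a) • dbas i) := by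
          simp_rw [TensorProduct.tmul_sum, TensorProduct.tmul_smul]
      _ = ∑ k, bas k ⊗ₜ[ℂ] (dbas k * a) := by simp_rw [expand2]
  have L2 : ∀ a : M, (∑ i, bas i ⊗ₜ[ℂ] (a * dbas i)) = ∑ i, (bas i * a) ⊗ₜ[ℂ] dbas i := by
    intro a
    have hcoef : ∀ i k, B (bas k) (a * dbas i) = B (bas k * a) (dbas i) := by
      intro i k
      rw [hsymm (bas k) (a * dbas i), hcyc a (dbas i) (bas k), hsymm (dbas i) (bas k * a)]
    calc ∑ i, bas i ⊗ₜ[ℂ] (a * dbas i)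
        = ∑ i, bas i ⊗ₜ[ℂ] (∑ k, B (bas k) (a * dbas i) • dbas k) := by
          simp_rw [expand2]
      _ = ∑ i, ∑ k, B (bas k) (a * dbas i) • (bas i ⊗ₜ[ℂ] dbas k) := by
          simp_rw [TensorProduct.tmul_sum, TensorProduct.tmul_smul]
      _ = ∑ k, ∑ i, B (bas k * a) (dbas i) • (bas i ⊗ₜ[ℂ] dbas k) := by
          rw [Finset.sum_comm]
          simp_rw [hcoef]
      _ = ∑ k, (∑ i, B (bas k * a) (dbas i) • bas i) ⊗ₜ[ℂ] dbas k := by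
          simp_rw [TensorProduct.sum_tmul, TensorProduct.smul_tmul']
      _ = ∑ k, (bas k * a) ⊗ₜ[ℂ] dbas k := by simp_rw [expand1]
  -- the permutation element and the master relation
  set σ : M ⊗[ℂ] M := ∑ i, bas i ⊗ₜ[ℂ] dbas i with hσ
  have master0 : ∀ a b : M, σ * (a ⊗ₜ[ℂ] b) = (b ⊗ₜ[ℂ] a) * σ := by
    intro a b
    have h1 : σ * (a ⊗ₜ[ℂ] b) = ∑ i, (bas i * a) ⊗ₜ[ℂ] (dbas i * b) := by
      rw [hσ, Finset.sum_mul]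
      simp_rw [Algebra.TensorProduct.tmul_mul_tmul]
    have h2 : (b ⊗ₜ[ℂ] a) * σ = ∑ i, (b * bas i) ⊗ₜ[ℂ] (a * dbas i) := by
      rw [hσ, Finset.mul_sum]
      simp_rw [Algebra.TensorProduct.tmul_mul_tmul]
    rw [h1, h2]
    calc ∑ i, (bas i * a) ⊗ₜ[ℂ] (dbas i * b)
        = (∑ i, (bas i * a) ⊗ₜ[ℂ] dbas i) * (1 ⊗ₜ[ℂ] b) := by
          rw [Finset.sum_mul]; simp_rw [Algebra.TensorProduct.tmul_mul_tmul, mul_one]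
      _ = (∑ i, bas i ⊗ₜ[ℂ] (a * dbas i)) * (1 ⊗ₜ[ℂ] b) := by rw [L2]
      _ = ∑ i, bas i ⊗ₜ[ℂ] (a * (dbas i * b)) := by
          rw [Finset.sum_mul]
          simp_rw [Algebra.TensorProduct.tmul_mul_tmul, mul_one, mul_assoc]
      _ = (1 ⊗ₜ[ℂ] a) * ∑ i, bas i ⊗ₜ[ℂ] (dbas i * b) := by
          rw [Finset.mul_sum]
          simp_rw [Algebra.TensorProduct.tmul_mul_tmul, one_mul]
      _ = (1 ⊗ₜ[ℂ] a) * ∑ i, (b * bas i) ⊗ₜ[ℂ] dbas i := by rw [L1]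
      _ = ∑ i, (b * bas i) ⊗ₜ[ℂ] (a * dbas i) := by
          rw [Finset.mul_sum]
          simp_rw [Algebra.TensorProduct.tmul_mul_tmul, one_mul]
  -- master relation extended to all of M ⊗ M
  have master : ∀ u : M ⊗[ℂ] M,
      σ * u = (Algebra.TensorProduct.comm ℂ M M u) * σ := by
    intro u
    induction u using TensorProduct.induction_on with
    | zero => simp
    | tmul a b => simpa using master0 a b
    | add u v hu hv => rw [mul_add, map_add, add_mul, hu, hv]
  -- the flip of the first two factors in the triple tensor product
  set T : (M ⊗[ℂ] M) ⊗[ℂ] M →ₐ[ℂ] (M ⊗[ℂ] M) ⊗[ℂ] M :=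
    Algebra.TensorProduct.map
      ((Algebra.TensorProduct.comm ℂ M M : M ⊗[ℂ] M ≃ₐ[ℂ] M ⊗[ℂ] M) :
        M ⊗[ℂ] M →ₐ[ℂ] M ⊗[ℂ] M) (AlgHom.id ℂ M) with hT
  have master12 : ∀ x : (M ⊗[ℂ] M) ⊗[ℂ] M,
      emb12 M σ * x = T x * emb12 M σ := by
    intro x
    induction x using TensorProduct.induction_on with
    | zero => simp
    | tmul u c =>
        show (σ ⊗ₜ[ℂ] (1 : M)) * (u ⊗ₜ[ℂ] c) = _ * (σ ⊗ₜ[ℂ] (1 : M))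
        rw [hT]
        simp only [Algebra.TensorProduct.map_tmul, AlgHom.coe_id, id_eq,
          Algebra.TensorProduct.tmul_mul_tmul, one_mul, mul_one, AlgHom.coe_coe]
        rw [master u]
        rfl
    | add u v hu hv => rw [mul_add, map_add, add_mul, hu, hv]
  have hT13 : T (emb13 M σ) = emb23 M σ := by
    simp only [hσ, map_sum]
    refine Finset.sum_congr rfl fun i _ => ?_
    rw [hT]
    simp [emb13, emb23]
  have hT23 : T (emb23 M σ) = emb13 M σ := by
    simp only [hσ, map_sum]
    refine Finset.sum_congr rfl fun i _ => ?_
    rw [hT]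
    simp [emb13, emb23]
  show emb12 M σ * emb13 M σ * emb23 M σ = emb23 M σ * emb13 M σ * emb12 M σ
  rw [mul_assoc, master12 (emb13 M σ * emb23 M σ), map_mul, hT13, hT23, mul_assoc]
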